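/- For every real α > 0 and all x, y ≥ 0, one has (x - y)(x^α - y^α) ≥ (4α/(α+1)^2) · (x^((α+1)/2) - y^((α+1)/2))^2. -/
import Mathlib

open intervalIntegral MeasureTheory

lemma aux_ineq (α x y : ℝ) (hα : 0 < α) (hy : 0 ≤ y) (hxy : y ≤ x) :
    (x - y) * (x ^ α - y ^ α) ≥
      (4 * α / (α + 1) ^ 2) * (x ^ ((α + 1) / 2) - y ^ ((α + 1) / 2)) ^ 2 := by
  rcases eq_or_lt_of_le hxy with rfl | hlt
  · simp
  set e : ℝ := (α - 1) / 2 with he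
  set β : ℝ := (α + 1) / 2 with hβ
  have hβ0 : 0 < β := by rw [hβ]; linarith
  have he1 : (-1 : ℝ) < e := by rw [he]; linarith
  have hα1 : (-1 : ℝ) < α - 1 := by linarith
  have h1 : IntervalIntegrable (fun t : ℝ => t ^ e) volume y x :=
    intervalIntegrable_rpow' he1
  have h2 : IntervalIntegrable (fun t : ℝ => t ^ (α - 1)) volume y x :=
    intervalIntegrable_rpow' hα1
  set L : ℝ := x - y with hL
  have hL0 : 0 < L := by rw [hL]; linarith
  set A : ℝ := ∫ t in y..x, t ^ e with hA
  set B : ℝ := ∫ t in y..x, t ^ (α - 1) with hB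
  set c : ℝ := A / L with hc
  -- Cauchy–Schwarz via 0 ≤ ∫ (t^e - c)^2
  have hcongr : Set.EqOn (fun t : ℝ => (t ^ e - c) ^ 2)
      (fun t : ℝ => t ^ (α - 1) - (2 * c) * t ^ e + c ^ 2) (Set.uIcc y x) := by
    intro t ht
    rw [Set.uIcc_of_le hxy] at ht
    have ht0 : 0 ≤ t := le_trans hy ht.1
    have hsq : (t ^ e) ^ 2 = t ^ (α - 1) := by
      rw [← Real.rpow_natCast (t ^ e) 2, ← Real.rpow_mul ht0]
      norm_num
      congr 1
      rw [he]; ring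
    simp only
    rw [← hsq]; ring
  have key : 0 ≤ B - (2 * c) * A + c ^ 2 * L := by
    have h0 : 0 ≤ ∫ t in y..x, (t ^ e - c) ^ 2 :=
      intervalIntegral.integral_nonneg hxy (fun t _ => sq_nonneg _)
    rw [intervalIntegral.integral_congr hcongr] at h0
    rw [intervalIntegral.integral_add ((h2.sub (h1.const_mul (2 * c)))) intervalIntegrable_const,
      intervalIntegral.integral_sub h2 (h1.const_mul (2 * c)),
      intervalIntegral.integral_const_mul, intervalIntegral.integral_const] at h0
    simpa [← hA, ← hB, ← hL, smul_eq_mul, mul_comm] using h0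
  have hCS : A ^ 2 ≤ L * B := by
    rw [hc] at key
    have hLne : L ≠ 0 := ne_of_gt hL0
    have h' : 0 ≤ (B - 2 * (A / L) * A + (A / L) ^ 2 * L) * L := mul_nonneg key hL0.le
    have heq : (B - 2 * (A / L) * A + (A / L) ^ 2 * L) * L = B * L - A ^ 2 := by
      field_simp
      ring
    rw [heq] at h'
    linarith
  -- evaluate the integrals
  have hAval : A = (x ^ β - y ^ β) / β := by
    rw [hA, integral_rpow (Or.inl he1)]
    have h3 : e + 1 = β := by rw [he, hβ]; ring
    rw [h3]
  have hBval : B = (x ^ α - y ^ α) / α := by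
    rw [hB, integral_rpow (Or.inl hα1)]
    norm_num
  rw [hAval, hBval] at hCS
  have hβne : β ≠ 0 := ne_of_gt hβ0
  have hαne : α ≠ 0 := ne_of_gt hα
  have hab : (α + 1) ^ 2 = 4 * β ^ 2 := by rw [hβ]; ring
  have hb2 : (0:ℝ) < β ^ 2 := by positivity
  rw [div_pow] at hCS
  have h5 : (x ^ β - y ^ β) ^ 2 ≤ L * ((x ^ α - y ^ α) / α) * β ^ 2 :=
    (div_le_iff₀ hb2).mp hCS
  have hCS2 : (x ^ β - y ^ β) ^ 2 * α ≤ (L * (x ^ α - y ^ α)) * β ^ 2 := by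
    calc (x ^ β - y ^ β) ^ 2 * α ≤ (L * ((x ^ α - y ^ α) / α) * β ^ 2) * α :=
          mul_le_mul_of_nonneg_right h5 hα.le
      _ = (L * (x ^ α - y ^ α)) * β ^ 2 := by field_simp
  rw [ge_iff_le, hab, div_mul_eq_mul_div, div_le_iff₀ (by positivity)]
  have hLdef : L = x - y := hL
  nlinarith [hCS2]

theorem algebraic_ineq_i (α x y : ℝ) (hα : 0 < α) (hx : 0 ≤ x) (hy : 0 ≤ y) :
    (x - y) * (x ^ α - y ^ α) ≥
      (4 * α / (α + 1) ^ 2) * (x ^ ((α + 1) / 2) - y ^ ((α + 1) / 2)) ^ 2 := by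
  rcases le_total y x with h | h
  · exact aux_ineq α x y hα hy h
  · have H := aux_ineq α y x hα hx h
    have e1 : (y - x) * (y ^ α - x ^ α) = (x - y) * (x ^ α - y ^ α) := by ring
    have e2 : (y ^ ((α + 1) / 2) - x ^ ((α + 1) / 2)) ^ 2
        = (x ^ ((α + 1) / 2) - y ^ ((α + 1) / 2)) ^ 2 := by ring
    rw [e1, e2] at H
    exact H
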